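/- The series ∑_{k=1}^∞ (h_k/(2k−1)) · C(2k,k)/4^k equals π/2, where h_k = ∑_{j=1}^k 1/(2j−1). -/

import Mathlib

open scoped BigOperators
open Real

noncomputable def cb (k : ℕ) : ℝ := (Nat.choose (2*k) k : ℝ) / 4^k

noncomputable def H (k : ℕ) : ℝ := ∑ j ∈ Finset.range k, (1:ℝ)/(j+1)

noncomputable def oh (k : ℕ) : ℝ := ∑ j ∈ Finset.range k, (1:ℝ)/(2*j+1)

/-! ### Basic facts about `cb` -/

lemma cb_zero : cb 0 = 1 := by simp [cb]

lemma cb_pos (k : ℕ) : 0 < cb k := by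
  have h := Nat.centralBinom_pos k
  have : (0:ℝ) < (Nat.choose (2*k) k : ℝ) := by
    exact_mod_cast h
  apply div_pos this (by positivity)

lemma cb_succ (k : ℕ) : cb (k+1) = cb k * (2*k+1) / (2*k+2) := by
  have h := Nat.succ_mul_centralBinom_succ k
  have h' : ((k:ℝ) + 1) * (Nat.choose (2*(k+1)) (k+1) : ℝ)
      = 2 * (2*k+1) * (Nat.choose (2*k) k : ℝ) := by
    have := congrArg (fun n : ℕ => (n : ℝ)) h
    push_cast [Nat.centralBinom] at this
    push_cast
    linarith
  have hk1 : ((k:ℝ)+1) ≠ 0 := by positivity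
  have h4 : (4:ℝ)^k ≠ 0 := by positivity
  rw [cb, cb, pow_succ]
  field_simp
  linear_combination 2*h' 

lemma cb_le_one (k : ℕ) : cb k ≤ 1 := by
  induction k with
  | zero => rw [cb_zero]
  | succ n ih =>
    rw [cb_succ]
    have h1 : (0:ℝ) < 2*n+2 := by positivity
    rw [div_le_one h1]
    nlinarith [cb_pos n]

lemma cb_sq (k : ℕ) : (2*(k:ℝ)+1) * cb k ^ 2 ≤ 1 := by
  induction k with
  | zero => rw [cb_zero]; norm_num
  | succ n ih =>
    rw [cb_succ]
    have h1 : (0:ℝ) < 2*n+2 := by positivity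
    have h2 : (0:ℝ) < cb n := cb_pos n
    have key : (2*((n:ℝ)+1)+1) * (cb n * (2*n+1) / (2*n+2))^2 ≤ (2*(n:ℝ)+1) * cb n ^ 2 := by
      rw [div_pow, ← mul_div_assoc, div_le_iff₀ (by positivity)]
      nlinarith [sq_nonneg (cb n), h2]
    push_cast at key ⊢
    linarith

lemma cb_rec (k : ℕ) : (2*(k:ℝ)+2) * cb (k+1) = (2*(k:ℝ)+1) * cb k := by
  rw [cb_succ]
  field_simp

/-! ### `oh` facts -/

lemma oh_succ (n : ℕ) : oh (n+1) = oh n + 1/(2*(n:ℝ)+1) := by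
  rw [oh, oh, Finset.sum_range_succ]

lemma oh_nonneg (n : ℕ) : 0 ≤ oh n := by
  apply Finset.sum_nonneg
  intro j _
  positivity

lemma oh_le (n : ℕ) : oh n ≤ 4 * (n:ℝ) ^ ((1:ℝ)/4) := by
  induction n with
  | zero => simp [oh]
  | succ n ih =>
    rw [oh_succ]
    set a : ℝ := ((n:ℝ)+1) ^ ((1:ℝ)/4) with ha
    set b : ℝ := (n:ℝ) ^ ((1:ℝ)/4) with hb
    have hbn : (0:ℝ) ≤ (n:ℝ) := Nat.cast_nonneg n
    have hb0 : 0 ≤ b := Real.rpow_nonneg hbn _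
    have ha1 : 1 ≤ a := Real.one_le_rpow (by linarith) (by norm_num)
    have hba : b ≤ a := by
      apply Real.rpow_le_rpow hbn (by linarith) (by norm_num)
    have ha4 : a^4 = (n:ℝ)+1 := by
      rw [ha, ← Real.rpow_natCast (((n:ℝ)+1) ^ ((1:ℝ)/4)) 4, ← Real.rpow_mul (by linarith)]
      norm_num
    have hb4 : b^4 = (n:ℝ) := by
      rw [hb, ← Real.rpow_natCast (((n:ℝ)) ^ ((1:ℝ)/4)) 4, ← Real.rpow_mul hbn]
      norm_num
    have ha0 : (0:ℝ) < a := by linarith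
    have hfact : 1 = (a - b) * (a^3 + a^2*b + a*b^2 + b^3) := by
      have : a^4 - b^4 = 1 := by rw [ha4, hb4]; ring
      nlinarith [this]
    have hb3 : b^3 ≤ a^3 := pow_le_pow_left₀ hb0 hba 3
    have hb2 : b^2 ≤ a^2 := pow_le_pow_left₀ hb0 hba 2
    have hc1 : a^2*b ≤ a^2*a := mul_le_mul_of_nonneg_left hba (sq_nonneg a)
    have hc2 : a*b^2 ≤ a*a^2 := mul_le_mul_of_nonneg_left hb2 ha0.le
    have hcube : a^3 + a^2*b + a*b^2 + b^3 ≤ 4*a^3 := by nlinarith [hc1, hc2, hb3]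
    have hstep : 1/(2*(n:ℝ)+1) ≤ 4*(a - b) := by
      have hab : 0 ≤ a - b := by linarith
      have h1 : 1 ≤ (a-b) * (4*a^3) := by nlinarith
      have ha3 : a^3 ≤ 2*(n:ℝ)+1 := by
        have : a^3 ≤ a^4 := by nlinarith
        rw [ha4] at this
        linarith
      rw [div_le_iff₀ (by positivity)]
      nlinarith [pow_pos ha0 3]
    push_cast
    linarith

/-! ### Partial sums of the arcsin series -/

noncomputable def pp (n : ℕ) (t : ℝ) : ℝ := ∑ k ∈ Finset.range n, cb k * t^(2*k)

noncomputable def PP (n : ℕ) (t : ℝ) : ℝ := ∑ k ∈ Finset.range n, cb k / (2*k+1) * t^(2*k+1)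

lemma pp_zero_eval (n : ℕ) : pp (n+1) 0 = 1 := by
  induction n with
  | zero => simp [pp, cb_zero]
  | succ m ih =>
    rw [pp, Finset.sum_range_succ, ← pp, ih]
    simp

lemma PP_zero_eval (n : ℕ) : PP n 0 = 0 := by
  rw [PP]
  apply Finset.sum_eq_zero
  intro k _
  simp

lemma hasDerivAt_pp (n : ℕ) (t : ℝ) :
    HasDerivAt (pp n) (∑ k ∈ Finset.range n, cb k * (((2*k : ℕ) : ℝ) * t^(2*k-1))) t := by
  have : ∀ k ∈ Finset.range n, HasDerivAt (fun s => cb k * s^(2*k)) (cb k * (((2*k : ℕ) : ℝ) * t^(2*k-1))) t := by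
    intro k _
    exact (hasDerivAt_pow (2*k) t).const_mul (cb k)
  exact HasDerivAt.fun_sum this

lemma hasDerivAt_PP (n : ℕ) (t : ℝ) : HasDerivAt (PP n) (pp n t) t := by
  have : ∀ k ∈ Finset.range n, HasDerivAt (fun s => cb k / (2*(k:ℝ)+1) * s^(2*k+1)) (cb k * t^(2*k)) t := by
    intro k _
    have h := (hasDerivAt_pow (2*k+1) t).const_mul (cb k / (2*(k:ℝ)+1))
    have h21 : (2*(k:ℝ)+1) ≠ 0 := by positivity
    refine h.congr_deriv ?_
    simp only [Nat.add_sub_cancel]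
    push_cast
    field_simp
  exact HasDerivAt.fun_sum this

lemma key_ident (n : ℕ) (t : ℝ) :
    (1 - t^2) * (∑ k ∈ Finset.range (n+1), cb k * (((2*k : ℕ) : ℝ) * t^(2*k-1))) - t * pp (n+1) t
      = -((2*(n:ℝ)+1) * cb n * t^(2*n+1)) := by
  induction n with
  | zero => simp [pp, cb_zero]
  | succ m ih =>
    have hsub : 2*(m+1) - 1 = 2*m + 1 := by omega
    have e1 : 2*(m+1) = 2*m+2 := by omega
    have h3 : t^(2*(m+1)) = t^(2*m+1) * t := by rw [e1, pow_succ]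
    have h4 : t^(2*(m+1)+1) = t^(2*m+1) * t^2 := by rw [e1]; ring
    have hs : ∑ k ∈ Finset.range (m+1+1), cb k * (((2*k : ℕ) : ℝ) * t^(2*k-1))
        = (∑ k ∈ Finset.range (m+1), cb k * (((2*k : ℕ) : ℝ) * t^(2*k-1)))
          + cb (m+1) * (((2*(m+1) : ℕ) : ℝ) * t^(2*(m+1)-1)) := Finset.sum_range_succ _ _
    have hp : pp (m+1+1) t = pp (m+1) t + cb (m+1) * t^(2*(m+1)) := by
      rw [pp, Finset.sum_range_succ, ← pp]
    rw [hs, hp, hsub, h3, h4]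
    push_cast at ih ⊢
    linear_combination ih + t^(2*m+1) * cb_rec m

/-! ### Monotonicity helper -/

lemma monoOn_aux {f f' : ℝ → ℝ} {x : ℝ}
    (hd : ∀ t ∈ Set.Icc (0:ℝ) x, HasDerivAt f (f' t) t)
    (h0 : ∀ t ∈ Set.Icc (0:ℝ) x, 0 ≤ f' t) : MonotoneOn f (Set.Icc 0 x) := by
  apply monotoneOn_of_deriv_nonneg (convex_Icc 0 x)
  · intro t ht
    exact (hd t ht).continuousAt.continuousWithinAt
  · intro t ht
    rw [interior_Icc] at ht
    exact ((hd t (Set.Ioo_subset_Icc_self ht)).differentiableAt).differentiableWithinAt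
  · intro t ht
    rw [interior_Icc] at ht
    rw [(hd t (Set.Ioo_subset_Icc_self ht)).deriv]
    exact h0 t (Set.Ioo_subset_Icc_self ht)

/-! ### Derivative of `pp (n+1) t * sqrt (1 - t^2)` -/

lemma hasDerivAt_g (n : ℕ) {t : ℝ} (h1 : -1 < t) (h2 : t < 1) :
    HasDerivAt (fun s => pp (n+1) s * Real.sqrt (1 - s^2))
      (-((2*(n:ℝ)+1) * cb n * t^(2*n+1)) / Real.sqrt (1 - t^2)) t := by
  have hpos : 0 < 1 - t^2 := by nlinarith
  have hne : 1 - t^2 ≠ 0 := ne_of_gt hpos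
  have hs0 : 0 < Real.sqrt (1 - t^2) := Real.sqrt_pos.mpr hpos
  have hss : Real.sqrt (1 - t^2) ^ 2 = 1 - t^2 := Real.sq_sqrt hpos.le
  have hsq : HasDerivAt (fun s : ℝ => 1 - s^2) (-(2*t)) t := by
    simpa using ((hasDerivAt_pow 2 t).const_sub 1)
  have hsqrt : HasDerivAt (fun s => Real.sqrt (1 - s^2)) (-(2*t) / (2 * Real.sqrt (1 - t^2))) t :=
    hsq.sqrt hne
  have hmul := (hasDerivAt_pp (n+1) t).mul hsqrt
  refine hmul.congr_deriv ?_
  symm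
  have key := key_ident n t
  set S := Real.sqrt (1 - t^2) with hS
  set D := ∑ k ∈ Finset.range (n+1), cb k * (((2*k : ℕ) : ℝ) * t^(2*k-1)) with hDdef
  have e0 : pp (n+1) t * (-(2*t)/(2*S)) = -(t * pp (n+1) t)/S := by
    field_simp
  have e2 : D * S = D * (1-t^2)/S := by
    rw [eq_div_iff (ne_of_gt hs0)]
    linear_combination D * hss
  rw [e0, e2, ← add_div]
  congr 1
  linarith [key]

lemma neg_g_mono {x : ℝ} (hx1 : x < 1) (n : ℕ) :
    MonotoneOn (fun s => -(pp (n+1) s * Real.sqrt (1 - s^2))) (Set.Icc 0 x) := by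
  apply monoOn_aux (f' := fun s => ((2*(n:ℝ)+1) * cb n * s^(2*n+1)) / Real.sqrt (1 - s^2))
  · intro s hs
    have h1 : (-1:ℝ) < s := lt_of_lt_of_le (by norm_num) hs.1
    have h2 : s < 1 := lt_of_le_of_lt hs.2 hx1
    have := (hasDerivAt_g n h1 h2).fun_neg
    simpa [neg_div] using this
  · intro s hs
    apply div_nonneg _ (Real.sqrt_nonneg _)
    have hc := (cb_pos n).le
    have hp : 0 ≤ s^(2*n+1) := pow_nonneg hs.1 _
    positivity

lemma g_le_one {x t : ℝ} (hx1 : x < 1) (ht : t ∈ Set.Icc (0:ℝ) x) (n : ℕ) :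
    pp (n+1) t * Real.sqrt (1 - t^2) ≤ 1 := by
  have h := neg_g_mono (x := t) (lt_of_le_of_lt ht.2 hx1) n
  have := h ⟨le_refl 0, ht.1⟩ ⟨ht.1, le_refl t⟩ ht.1
  simp only [pp_zero_eval] at this
  norm_num at this
  linarith

lemma g_lower {x : ℝ} (hx0 : 0 ≤ x) (hx1 : x < 1) (n : ℕ) :
    1 - (2*(n:ℝ)+1) * x^(2*n+2) / Real.sqrt (1-x^2) ≤ pp (n+1) x * Real.sqrt (1-x^2) := by
  have hxpos : 0 < 1 - x^2 := by nlinarith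
  have hs0 : 0 < Real.sqrt (1 - x^2) := Real.sqrt_pos.mpr hxpos
  set A : ℝ := (2*(n:ℝ)+1) * x^(2*n+1) / Real.sqrt (1-x^2) with hA
  have mono : MonotoneOn (fun s => pp (n+1) s * Real.sqrt (1-s^2) + A * s) (Set.Icc 0 x) := by
    apply monoOn_aux
      (f' := fun s => -((2*(n:ℝ)+1) * cb n * s^(2*n+1)) / Real.sqrt (1 - s^2) + A)
    · intro s hs
      have h1 : (-1:ℝ) < s := lt_of_lt_of_le (by norm_num) hs.1
      have h2 : s < 1 := lt_of_le_of_lt hs.2 hx1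
      have hid : HasDerivAt (fun y : ℝ => A * y) A s := by
        simpa using (hasDerivAt_id s).const_mul A
      exact (hasDerivAt_g n h1 h2).add hid
    · intro s hs
      have h2 : s < 1 := lt_of_le_of_lt hs.2 hx1
      have hspos : 0 < 1 - s^2 := by nlinarith [hs.1]
      have hsq0 : 0 < Real.sqrt (1 - s^2) := Real.sqrt_pos.mpr hspos
      have hle : (2*(n:ℝ)+1) * cb n * s^(2*n+1) / Real.sqrt (1 - s^2) ≤ A := by
        rw [hA]
        have hn0 : (0:ℝ) ≤ 2*(n:ℝ)+1 := by positivity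
        apply div_le_div₀ (mul_nonneg hn0 (pow_nonneg hx0 _))
        · have h1 : cb n ≤ 1 := cb_le_one n
          have h2' : s^(2*n+1) ≤ x^(2*n+1) := pow_le_pow_left₀ hs.1 hs.2 _
          have h3 : 0 ≤ s^(2*n+1) := pow_nonneg hs.1 _
          have e1 : cb n * s^(2*n+1) ≤ x^(2*n+1) := by nlinarith [cb_pos n]
          have := mul_le_mul_of_nonneg_left e1 hn0
          nlinarith [this]
        · exact hs0
        · apply Real.sqrt_le_sqrt
          nlinarith [hs.1, hs.2]
      rw [neg_div]
      linarith
  have h0x : (0:ℝ) ∈ Set.Icc (0:ℝ) x := ⟨le_refl 0, hx0⟩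
  have hxx : x ∈ Set.Icc (0:ℝ) x := ⟨hx0, le_refl x⟩
  have := mono h0x hxx hx0
  simp only [pp_zero_eval, mul_zero, add_zero] at this
  norm_num at this
  have hAx : A * x = (2*(n:ℝ)+1) * x^(2*n+2) / Real.sqrt (1-x^2) := by
    rw [hA]
    rw [div_mul_eq_mul_div]
    congr 1
    ring
  rw [hAx] at this
  linarith

/-! ### Comparison with arcsin -/

lemma PP_le_arcsin {x : ℝ} (hx0 : 0 ≤ x) (hx1 : x < 1) (n : ℕ) :
    PP n x ≤ Real.arcsin x := by
  have mono : MonotoneOn (fun s => Real.arcsin s - PP n s) (Set.Icc 0 x) := by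
    apply monoOn_aux (f' := fun s => 1/Real.sqrt (1-s^2) - pp n s)
    · intro s hs
      have h2 : s < 1 := lt_of_le_of_lt hs.2 hx1
      have h1 : (-1:ℝ) < s := lt_of_lt_of_le (by norm_num) hs.1
      exact (Real.hasDerivAt_arcsin (by linarith) (by linarith)).sub (hasDerivAt_PP n s)
    · intro s hs
      have h2 : s < 1 := lt_of_le_of_lt hs.2 hx1
      have hspos : 0 < 1 - s^2 := by nlinarith [hs.1]
      have hsq0 : 0 < Real.sqrt (1 - s^2) := Real.sqrt_pos.mpr hspos
      rw [sub_nonneg]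
      cases n with
      | zero =>
        rw [pp]
        simp only [Finset.range_zero, Finset.sum_empty]
        positivity
      | succ m =>
        have hg := g_le_one hx1 hs m
        rw [le_div_iff₀ hsq0]
        linarith
  have := mono ⟨le_refl 0, hx0⟩ ⟨hx0, le_refl x⟩ hx0
  simp only [Real.arcsin_zero, PP_zero_eval, sub_zero] at this
  linarith

lemma arcsin_le_PP {x : ℝ} (hx0 : 0 ≤ x) (hx1 : x < 1) (n : ℕ) :
    Real.arcsin x - PP (n+1) x ≤ (2*(n:ℝ)+1) * x^(2*n+2) / (1 - x^2) := by
  have hxpos : 0 < 1 - x^2 := by nlinarith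
  have hs0 : 0 < Real.sqrt (1 - x^2) := Real.sqrt_pos.mpr hxpos
  have hss : Real.sqrt (1 - x^2) ^ 2 = 1 - x^2 := Real.sq_sqrt hxpos.le
  set M : ℝ := (2*(n:ℝ)+1) * x^(2*n+2) / (1 - x^2) with hM
  have hM0 : 0 ≤ M := by
    rw [hM]
    apply div_nonneg _ hxpos.le
    exact mul_nonneg (by positivity) (pow_nonneg hx0 _)
  have mono : MonotoneOn (fun s => M * s - (Real.arcsin s - PP (n+1) s)) (Set.Icc 0 x) := by
    apply monoOn_aux (f' := fun s => M - (1/Real.sqrt (1-s^2) - pp (n+1) s))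
    · intro s hs
      have h2 : s < 1 := lt_of_le_of_lt hs.2 hx1
      have h1 : (-1:ℝ) < s := lt_of_lt_of_le (by norm_num) hs.1
      have hid : HasDerivAt (fun y : ℝ => M * y) M s := by
        simpa using (hasDerivAt_id s).const_mul M
      exact hid.sub ((Real.hasDerivAt_arcsin (by linarith) (by linarith)).sub (hasDerivAt_PP (n+1) s))
    · intro s hs
      have h2 : s < 1 := lt_of_le_of_lt hs.2 hx1
      have hspos : 0 < 1 - s^2 := by nlinarith [hs.1]
      have hsq0 : 0 < Real.sqrt (1 - s^2) := Real.sqrt_pos.mpr hspos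
      rw [sub_nonneg]
      -- 1/√(1-s²) - pp (n+1) s ≤ M
      have hgs : pp (n+1) x * Real.sqrt (1-x^2) ≤ pp (n+1) s * Real.sqrt (1-s^2) := by
        have h := neg_g_mono hx1 n ⟨hs.1, hs.2⟩ ⟨hx0, le_refl x⟩ hs.2
        dsimp at h
        linarith
      have hgl := g_lower hx0 hx1 n
      have hnum : 1 - pp (n+1) s * Real.sqrt (1-s^2) ≤ (2*(n:ℝ)+1) * x^(2*n+2) / Real.sqrt (1-x^2) := by
        linarith
      have e1 : (1 - pp (n+1) s * Real.sqrt (1-s^2))/Real.sqrt (1-s^2)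
          = 1/Real.sqrt (1-s^2) - pp (n+1) s := by
        rw [sub_div, mul_div_assoc, div_self (ne_of_gt hsq0), mul_one]
      rw [← e1]
      have hsle : Real.sqrt (1-x^2) ≤ Real.sqrt (1-s^2) := by
        apply Real.sqrt_le_sqrt
        nlinarith [hs.1, hs.2]
      calc (1 - pp (n+1) s * Real.sqrt (1-s^2))/Real.sqrt (1-s^2)
          ≤ ((2*(n:ℝ)+1) * x^(2*n+2) / Real.sqrt (1-x^2))/Real.sqrt (1-x^2) := by
            apply div_le_div₀ (by positivity) hnum hs0 hsle
        _ = M := by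
            have hms : Real.sqrt (1-x^2) * Real.sqrt (1-x^2) = 1 - x^2 :=
              Real.mul_self_sqrt hxpos.le
            rw [hM, div_div, hms]
  have := mono ⟨le_refl 0, hx0⟩ ⟨hx0, le_refl x⟩ hx0
  simp only [Real.arcsin_zero, PP_zero_eval, sub_zero, mul_zero, zero_sub, neg_zero, sub_self] at this
  have hx' : M * x ≤ M := by nlinarith [hM0, hx1]
  linarith

/-! ### Convergence of partial sums to arcsin -/

lemma tendsto_PP {x : ℝ} (hx0 : 0 ≤ x) (hx1 : x < 1) :
    Filter.Tendsto (fun n => PP n x) Filter.atTop (nhds (Real.arcsin x)) := by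
  set r : ℝ := x^2 with hr
  have hr0 : 0 ≤ r := sq_nonneg x
  have hr1 : r < 1 := by rw [hr]; nlinarith
  have hnr : Filter.Tendsto (fun n : ℕ => (n:ℝ) * r^n) Filter.atTop (nhds 0) := by
    have hs := summable_pow_mul_geometric_of_norm_lt_one 1
      (r := r) (by rw [Real.norm_eq_abs, abs_of_nonneg hr0]; exact hr1)
    have := hs.tendsto_atTop_zero
    simpa using this
  have hrn : Filter.Tendsto (fun n : ℕ => r^n) Filter.atTop (nhds 0) :=
    tendsto_pow_atTop_nhds_zero_of_lt_one hr0 hr1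
  have hb : Filter.Tendsto (fun n : ℕ => (2*(n:ℝ)+1) * x^(2*n+2) / (1-x^2))
      Filter.atTop (nhds 0) := by
    have hcomb : Filter.Tendsto (fun n : ℕ => (2*((n:ℝ)*r^n) + r^n) * (r/(1-r)))
        Filter.atTop (nhds ((2*0+0) * (r/(1-r)))) :=
      (((hnr.const_mul 2)).add hrn).mul_const _
    have heq : ∀ n : ℕ, (2*((n:ℝ)*r^n) + r^n) * (r/(1-r)) = (2*(n:ℝ)+1) * x^(2*n+2) / (1-x^2) := by
      intro n
      have hx2 : x^(2*n+2) = r^n * r := by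
        rw [hr, ← pow_mul, ← pow_add]
      rw [hx2, hr]
      have : (1:ℝ) - x^2 ≠ 0 := by nlinarith
      field_simp
    have := hcomb.congr heq
    norm_num at this
    exact this
  have h1 : Filter.Tendsto (fun n => Real.arcsin x - PP (n+1) x) Filter.atTop (nhds 0) := by
    apply tendsto_of_tendsto_of_tendsto_of_le_of_le' tendsto_const_nhds hb
    · apply Filter.Eventually.of_forall
      intro n
      have := PP_le_arcsin hx0 hx1 (n+1)
      linarith
    · apply Filter.Eventually.of_forall
      intro n
      exact arcsin_le_PP hx0 hx1 n
  have h2 : Filter.Tendsto (fun n => Real.arcsin x - PP n x) Filter.atTop (nhds 0) :=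
    (Filter.tendsto_add_atTop_iff_nat 1).mp h1
  have h3 := (tendsto_const_nhds (x := Real.arcsin x) (f := Filter.atTop (α := ℕ))).sub h2
  simp only [sub_zero] at h3
  convert h3 using 2 with n
  ring

/-! ### The sequence approaching 1 -/

noncomputable def xm (m : ℕ) : ℝ := 1 - 1/(m+2)

lemma xm_nonneg (m : ℕ) : 0 ≤ xm m := by
  rw [xm]
  have h1 : 1/((m:ℝ)+2) ≤ 1 := by
    rw [div_le_one (by positivity)]
    have : (0:ℝ) ≤ (m:ℝ) := Nat.cast_nonneg m
    linarith
  linarith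

lemma xm_lt_one (m : ℕ) : xm m < 1 := by
  rw [xm]
  have h1 : 0 < 1/((m:ℝ)+2) := by positivity
  linarith

lemma xm_tendsto : Filter.Tendsto xm Filter.atTop (nhds 1) := by
  have h2 : Filter.Tendsto (fun m : ℕ => 1/((m:ℝ)+2)) Filter.atTop (nhds 0) := by
    have := (tendsto_one_div_add_atTop_nhds_zero_nat (𝕜 := ℝ)).comp (Filter.tendsto_add_atTop_nat 1)
    apply this.congr
    intro m
    simp only [Function.comp_apply]
    push_cast
    ring_nf
  have h3 := (tendsto_const_nhds (x := (1:ℝ)) (f := Filter.atTop (α := ℕ))).sub h2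
  simp only [sub_zero] at h3
  exact h3

lemma PP_cont (n : ℕ) : Continuous (fun x : ℝ => PP n x) := by
  apply continuous_finset_sum
  intro k _
  exact continuous_const.mul (continuous_pow (2*k+1))

lemma PP_one (n : ℕ) : PP n 1 = ∑ k ∈ Finset.range n, cb k/(2*(k:ℝ)+1) := by
  rw [PP]
  apply Finset.sum_congr rfl
  intro k _
  rw [one_pow, mul_one]

lemma sum_le_pi_div_two (n : ℕ) : ∑ k ∈ Finset.range n, cb k/(2*(k:ℝ)+1) ≤ π/2 := by
  have key : ∀ m, PP n (xm m) ≤ π/2 := fun m =>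
    (PP_le_arcsin (xm_nonneg m) (xm_lt_one m) n).trans (Real.arcsin_le_pi_div_two _)
  have ht : Filter.Tendsto (fun m => PP n (xm m)) Filter.atTop (nhds (PP n 1)) :=
    ((PP_cont n).continuousAt).tendsto.comp xm_tendsto
  have := le_of_tendsto ht (Filter.Eventually.of_forall key)
  rwa [PP_one] at this

lemma cb_term_nonneg (k : ℕ) : 0 ≤ cb k/(2*(k:ℝ)+1) := by
  apply div_nonneg (cb_pos k).le (by positivity)

lemma summable_cb : Summable (fun k => cb k/(2*(k:ℝ)+1)) :=
  summable_of_sum_range_le cb_term_nonneg sum_le_pi_div_two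

lemma tsum_cb : ∑' k : ℕ, cb k/(2*(k:ℝ)+1) = π/2 := by
  apply le_antisymm
  · exact Real.tsum_le_of_sum_range_le cb_term_nonneg sum_le_pi_div_two
  · have h1 : ∀ m, Real.arcsin (xm m) ≤ ∑' k : ℕ, cb k/(2*(k:ℝ)+1) := by
      intro m
      apply le_of_tendsto (tendsto_PP (xm_nonneg m) (xm_lt_one m))
      apply Filter.Eventually.of_forall
      intro n
      calc PP n (xm m) ≤ ∑ k ∈ Finset.range n, cb k/(2*(k:ℝ)+1) := by
            rw [PP]
            apply Finset.sum_le_sum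
            intro k _
            have h1 : 0 ≤ cb k/(2*(k:ℝ)+1) := cb_term_nonneg k
            have h2 : xm m ^ (2*k+1) ≤ 1 := pow_le_one₀ (xm_nonneg m) (xm_lt_one m).le
            exact mul_le_of_le_one_right h1 h2
        _ ≤ ∑' k : ℕ, cb k/(2*(k:ℝ)+1) := Summable.sum_le_tsum _ (fun k _ => cb_term_nonneg k) summable_cb
    have h2 : Filter.Tendsto (fun m => Real.arcsin (xm m)) Filter.atTop (nhds (π/2)) := by
      have := Real.continuous_arcsin.continuousAt.tendsto.comp xm_tendsto
      rwa [Real.arcsin_one] at this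
    exact le_of_tendsto h2 (Filter.Eventually.of_forall h1)

/-! ### Telescoping identity for the main series -/

lemma main_ident (n : ℕ) :
    ∑ k ∈ Finset.range n, (oh (k+1)/(2*((k:ℝ)+1)-1)) * cb (k+1)
      = (∑ k ∈ Finset.range n, cb k/(2*(k:ℝ)+1)) - oh n * cb n := by
  induction n with
  | zero => simp [oh]
  | succ m ih =>
    rw [Finset.sum_range_succ, Finset.sum_range_succ, ih, oh_succ]
    have h2 : 2*((m:ℝ)+1)-1 = 2*(m:ℝ)+1 := by ring
    have step : (oh m + 1/(2*(m:ℝ)+1))/(2*((m:ℝ)+1)-1) * cb (m+1)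
        = cb m/(2*(m:ℝ)+1) - (oh m + 1/(2*(m:ℝ)+1)) * cb (m+1) + oh m * cb m := by
      rw [h2, cb_succ]
      have h21 : (2*(m:ℝ)+1) ≠ 0 := by positivity
      have h22 : (2*(m:ℝ)+2) ≠ 0 := by positivity
      field_simp
      ring
    push_cast at step ⊢
    linarith [step]

/-! ### `oh n * cb n → 0` -/

lemma cb_le_sqrt (n : ℕ) : cb n ≤ Real.sqrt (1/(2*(n:ℝ)+1)) := by
  have h : cb n ^ 2 ≤ 1/(2*(n:ℝ)+1) := by
    rw [le_div_iff₀ (by positivity)]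
    nlinarith [cb_sq n]
  calc cb n = Real.sqrt (cb n ^ 2) := (Real.sqrt_sq (cb_pos n).le).symm
    _ ≤ Real.sqrt (1/(2*(n:ℝ)+1)) := Real.sqrt_le_sqrt h

lemma tendsto_oh_cb : Filter.Tendsto (fun n => oh n * cb n) Filter.atTop (nhds 0) := by
  have hup : Filter.Tendsto (fun n : ℕ => 4 * (n:ℝ) ^ (-((1:ℝ)/4))) Filter.atTop (nhds 0) := by
    have h := (tendsto_rpow_neg_atTop (by norm_num : (0:ℝ) < 1/4)).comp
      tendsto_natCast_atTop_atTop (α := ℕ)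
    have := h.const_mul (4:ℝ)
    simpa using this
  apply tendsto_of_tendsto_of_tendsto_of_le_of_le' tendsto_const_nhds hup
  · apply Filter.Eventually.of_forall
    intro n
    exact mul_nonneg (oh_nonneg n) (cb_pos n).le
  · have hev : ∀ n : ℕ, 1 ≤ n → oh n * cb n ≤ 4 * (n:ℝ) ^ (-((1:ℝ)/4)) := by
      intro n hn
      have hn0 : (0:ℝ) < (n:ℝ) := by exact_mod_cast hn
      have h1 : oh n ≤ 4 * (n:ℝ) ^ ((1:ℝ)/4) := oh_le n
      have h2 : cb n ≤ Real.sqrt (1/(2*(n:ℝ)+1)) := cb_le_sqrt n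
      have h3 : Real.sqrt (1/(2*(n:ℝ)+1)) ≤ Real.sqrt (1/(n:ℝ)) := by
        apply Real.sqrt_le_sqrt
        rw [div_le_div_iff₀ (by positivity) hn0]
        linarith
      have h4 : Real.sqrt (1/(n:ℝ)) = (n:ℝ) ^ (-((1:ℝ)/2)) := by
        rw [one_div, Real.sqrt_inv, Real.sqrt_eq_rpow, ← Real.rpow_neg hn0.le]
      have h5 : cb n ≤ (n:ℝ) ^ (-((1:ℝ)/2)) := by
        rw [← h4]; exact h2.trans h3
      have h6 : oh n * cb n ≤ (4 * (n:ℝ) ^ ((1:ℝ)/4)) * ((n:ℝ) ^ (-((1:ℝ)/2))) := by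
        apply mul_le_mul h1 h5 (cb_pos n).le
        positivity
      have h7 : (4 * (n:ℝ) ^ ((1:ℝ)/4)) * ((n:ℝ) ^ (-((1:ℝ)/2)))
          = 4 * (n:ℝ) ^ (-((1:ℝ)/4)) := by
        rw [mul_assoc, ← Real.rpow_add hn0]
        norm_num
      rw [h7] at h6
      exact h6
    filter_upwards [Filter.eventually_ge_atTop 1] with n hn
    exact hev n hn

/-! ### Main theorem -/

theorem stmt_17 :
    ∑' k : ℕ, (oh (k+1)/(2*((k:ℝ)+1)-1)) * cb (k+1) = Real.pi/2 := by
  have hnn : ∀ k : ℕ, 0 ≤ (oh (k+1)/(2*((k:ℝ)+1)-1)) * cb (k+1) := by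
    intro k
    apply mul_nonneg _ (cb_pos _).le
    apply div_nonneg (oh_nonneg _)
    have : (0:ℝ) ≤ (k:ℝ) := Nat.cast_nonneg k
    linarith
  have hpart : ∀ n, ∑ k ∈ Finset.range n, (oh (k+1)/(2*((k:ℝ)+1)-1)) * cb (k+1) ≤ π/2 := by
    intro n
    rw [main_ident]
    have h1 := sum_le_pi_div_two n
    have h2 : 0 ≤ oh n * cb n := mul_nonneg (oh_nonneg n) (cb_pos n).le
    linarith
  have hsum : Summable (fun k => (oh (k+1)/(2*((k:ℝ)+1)-1)) * cb (k+1)) :=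
    summable_of_sum_range_le hnn hpart
  have htend : Filter.Tendsto
      (fun n => ∑ k ∈ Finset.range n, (oh (k+1)/(2*((k:ℝ)+1)-1)) * cb (k+1))
      Filter.atTop (nhds (π/2)) := by
    have h1 : Filter.Tendsto (fun n => ∑ k ∈ Finset.range n, cb k/(2*(k:ℝ)+1))
        Filter.atTop (nhds (π/2)) := by
      have hs := summable_cb.hasSum
      rw [tsum_cb] at hs
      exact hs.tendsto_sum_nat
    have h2 := h1.sub tendsto_oh_cb
    simp only [sub_zero] at h2
    apply h2.congr
    intro n
    exact (main_ident n).symm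
  have hfin := hsum.hasSum.tendsto_sum_nat
  exact tendsto_nhds_unique hfin htend
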